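/- Fix D ≥ 0, R ≥ 0, and ε ∈ [0,1). If a (D, R, ε, 0) code exists (possibly with a stochastic encoder), then there exists a nonempty set C ⊆ 𝒴 with |C| ≤ 2^{⌊R⌋+1} − 1 such that Pr{min_{y ∈ C} d(X, y) > D} ≤ ε; i.e., from any variable-length code with zero overflow probability one can construct a fixed-length code of codeword length ⌊R⌋ + 1 whose excess distortion probability is at most ε. -/

import Mathlib

open scoped ENNReal
open MeasureTheory

noncomputable section

/-- The smooth max entropy `H^δ(P)` (base 2) of a probability distribution `P`
on a finite alphabet `𝒴`: the least `log₂ |𝒲|` over subsets `𝒲 ⊆ 𝒴` of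
probability at least `1 - δ`. -/
def smoothMaxEnt {𝒴 : Type} [Fintype 𝒴] (P : 𝒴 → ℝ≥0∞) (δ : ℝ) : ℝ :=
  sInf {r : ℝ | ∃ W : Finset 𝒴,
    ENNReal.ofReal (1 - δ) ≤ ∑ y ∈ W, P y ∧ r = Real.logb 2 (W.card)}

/-- A channel (conditional probability distribution) from `𝒳` to `𝒴`. -/
def IsChannel {𝒳 𝒴 : Type} [Fintype 𝒴] (W : 𝒳 → 𝒴 → ℝ≥0∞) : Prop :=
  ∀ x, ∑ y, W x y = 1

/-- The output marginal distribution of the channel `W` with input distribution `pX`. -/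
def marginal {𝒳 𝒴 : Type} [Fintype 𝒳] (pX : 𝒳 → ℝ≥0∞) (W : 𝒳 → 𝒴 → ℝ≥0∞) : 𝒴 → ℝ≥0∞ :=
  fun y => ∑ x, pX x * W x y

/-- `Pr{d(X,Y) > D}` for the joint law `pX · W`. -/
def chExcess {𝒳 𝒴 : Type} [Fintype 𝒳] [Fintype 𝒴] (pX : 𝒳 → ℝ≥0∞) (W : 𝒳 → 𝒴 → ℝ≥0∞)
    (d : 𝒳 → 𝒴 → ℝ) (D : ℝ) : ℝ≥0∞ :=
  ∑ x, ∑ y, if D < d x y then pX x * W x y else 0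

/-- The quantity `G^δ_{D,ε}(X)` as a value in `[0,∞]`: the infimum of the smooth max
entropy of the output marginal, over channels whose excess-distortion probability is
at most `ε`; it equals `+∞` if no such channel exists. -/
def Gq {𝒳 𝒴 : Type} [Fintype 𝒳] [Fintype 𝒴] (pX : 𝒳 → ℝ≥0∞) (d : 𝒳 → 𝒴 → ℝ)
    (D ε δ : ℝ) : ℝ≥0∞ :=
  ⨅ (W : 𝒳 → 𝒴 → ℝ≥0∞) (_ : IsChannel W) (_ : chExcess pX W d D ≤ ENNReal.ofReal ε),
    ENNReal.ofReal (smoothMaxEnt (marginal pX W) δ)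

/-- `(f, g)` is a `(D, R, ε, δ)` code: `f` is a (possibly stochastic) encoder assigning
to each source symbol a probability distribution on binary strings (`List Bool`),
`g` is a decoder, the excess distortion probability is at most `ε`, and the
overflow probability is at most `δ`. -/
def IsCode {𝒳 𝒴 : Type} [Fintype 𝒳] (pX : 𝒳 → ℝ≥0∞) (d : 𝒳 → 𝒴 → ℝ)
    (D R ε δ : ℝ) (f : 𝒳 → List Bool → ℝ≥0∞) (g : List Bool → 𝒴) : Prop :=
  (∀ x, ∑' w : List Bool, f x w = 1) ∧
  (∑ x, ∑' w : List Bool, (if D < d x (g w) then pX x * f x w else 0))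
      ≤ ENNReal.ofReal ε ∧
  (∑ x, ∑' w : List Bool, (if R < (w.length : ℝ) then pX x * f x w else 0))
      ≤ ENNReal.ofReal δ

/-- The deterministic encoder `f : 𝒳 → {0,1}*` viewed as a stochastic encoder. -/
def detEnc {𝒳 : Type} (f : 𝒳 → List Bool) : 𝒳 → List Bool → ℝ≥0∞ :=
  fun x w => if w = f x then 1 else 0

/-- The sum of the `j` largest values of `P`. -/
def topSum {𝒴 : Type} [Fintype 𝒴] (P : 𝒴 → ℝ≥0∞) (j : ℕ) : ℝ≥0∞ :=
  ⨆ (W : Finset 𝒴) (_ : W.card ≤ j), ∑ y ∈ W, P y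


/-- Finset of binary strings of length at most `n`. -/
def strS : ℕ → Finset (List Bool)
  | 0 => {[]}
  | n + 1 => {([] : List Bool)} ∪ (strS n).image (List.cons true)
      ∪ (strS n).image (List.cons false)

lemma strS_mem : ∀ (n : ℕ) (w : List Bool), w.length ≤ n → w ∈ strS n := by
  intro n
  induction n with
  | zero =>
    intro w hw
    simp [strS, List.length_eq_zero_iff.mp (Nat.le_zero.mp hw)]
  | succ n ih =>
    intro w hw
    cases w with
    | nil => simp [strS]
    | cons b t =>
      have ht : t.length ≤ n := by simpa using hw
      cases b with
      | true =>
        exact Finset.mem_union_left _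
          (Finset.mem_union_right _ (Finset.mem_image_of_mem _ (ih t ht)))
      | false =>
        exact Finset.mem_union_right _ (Finset.mem_image_of_mem _ (ih t ht))

lemma strS_card : ∀ n : ℕ, (strS n).card ≤ 2 ^ (n + 1) - 1 := by
  intro n
  induction n with
  | zero => simp [strS]
  | succ n ih =>
    have h1 : (strS (n + 1)).card ≤ 1 + (strS n).card + (strS n).card := by
      calc (strS (n + 1)).card
          ≤ ({([] : List Bool)} ∪ (strS n).image (List.cons true)).card
              + ((strS n).image (List.cons false)).card := Finset.card_union_le _ _
        _ ≤ (({([] : List Bool)} : Finset (List Bool)).card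
              + ((strS n).image (List.cons true)).card)
              + ((strS n).image (List.cons false)).card := by
            exact Nat.add_le_add_right (Finset.card_union_le _ _) _
        _ ≤ 1 + (strS n).card + (strS n).card := by
            have := Finset.card_image_le (s := strS n) (f := List.cons true)
            have := Finset.card_image_le (s := strS n) (f := List.cons false)
            simp only [Finset.card_singleton]
            omega
    have h2 : 1 ≤ 2 ^ (n + 1) := Nat.one_le_two_pow
    have h3 : 2 ^ (n + 2) = 2 * 2 ^ (n + 1) := by ring
    omega

/-- From any `(D, R, ε, 0)` code (possibly stochastic encoder, zero overflow
probability) one can construct a fixed-length codebook `C ⊆ 𝒴` with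
`|C| ≤ 2^{⌊R⌋+1} - 1` whose excess distortion probability is at most `ε`. -/
theorem stmt13 {𝒳 𝒴 : Type} [Fintype 𝒳] [Fintype 𝒴] [Nonempty 𝒳] [Nonempty 𝒴]
    (pX : 𝒳 → ℝ≥0∞) (hpX : ∑ x, pX x = 1)
    (d : 𝒳 → 𝒴 → ℝ) (hd : ∀ x y, 0 ≤ d x y)
    (D R ε : ℝ) (hD : 0 ≤ D) (hR : 0 ≤ R) (hε : 0 ≤ ε ∧ ε < 1)
    (f : 𝒳 → List Bool → ℝ≥0∞) (g : List Bool → 𝒴)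
    (hcode : IsCode pX d D R ε 0 f g) :
    ∃ C : Finset 𝒴, C.Nonempty ∧ (C.card : ℝ) ≤ (2 : ℝ) ^ (⌊R⌋ + 1) - 1 ∧
      (∑ x, if ∀ y ∈ C, D < d x y then pX x else 0) ≤ ENNReal.ofReal ε := by
  classical
  obtain ⟨hf1, hexc, hover⟩ := hcode
  set n : ℕ := (⌊R⌋).toNat with hn
  have hfloor : (⌊R⌋ : ℤ) = (n : ℤ) := (Int.toNat_of_nonneg (Int.floor_nonneg.mpr hR)).symm
  -- overflow probability is zero
  have hover0 : ∀ x (w : List Bool), R < (w.length : ℝ) → pX x * f x w = 0 := by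
    intro x w hw
    have h0 : (∑ x, ∑' w : List Bool,
        (if R < (w.length : ℝ) then pX x * f x w else 0)) = 0 :=
      le_antisymm (by simpa using hover) zero_le
    have hx := (Finset.sum_eq_zero_iff.mp h0) x (Finset.mem_univ x)
    have hxw := (ENNReal.tsum_eq_zero.mp hx) w
    simpa [hw] using hxw
  refine ⟨(strS n).image g, ⟨g [], Finset.mem_image_of_mem g (strS_mem n [] (by simp))⟩,
    ?_, ?_⟩
  · -- cardinality bound
    have h1 : ((strS n).image g).card ≤ 2 ^ (n + 1) - 1 :=
      le_trans (Finset.card_image_le) (strS_card n)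
    have h2 : (2 : ℝ) ^ (⌊R⌋ + 1) = (2 : ℝ) ^ (n + 1) := by
      rw [hfloor]
      norm_cast
    rw [h2]
    have h3 : (((strS n).image g).card : ℝ) ≤ ((2 ^ (n + 1) - 1 : ℕ) : ℝ) := by
      exact_mod_cast h1
    calc (((strS n).image g).card : ℝ) ≤ ((2 ^ (n + 1) - 1 : ℕ) : ℝ) := h3
      _ = (2 : ℝ) ^ (n + 1) - 1 := by
          rw [Nat.cast_sub Nat.one_le_two_pow]; push_cast; ring
  · -- excess distortion bound
    refine le_trans ?_ hexc
    apply Finset.sum_le_sum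
    intro x _
    by_cases hx : ∀ y ∈ (strS n).image g, D < d x y
    · rw [if_pos hx]
      have hpeq : pX x = ∑' w : List Bool, pX x * f x w := by
        rw [ENNReal.tsum_mul_left, hf1 x, mul_one]
      refine le_trans hpeq.le (ENNReal.tsum_le_tsum ?_)
      intro w
      by_cases hdw : D < d x (g w)
      · rw [if_pos hdw]
      · -- then g w ∉ C, so w must be long, so the mass is zero
        by_cases hlen : w.length ≤ n
        · exact absurd (hx (g w) (Finset.mem_image_of_mem g (strS_mem n w hlen)))
            hdw
        · have hR' : R < (w.length : ℝ) := by
            have h4 : (⌊R⌋ : ℤ) + 1 ≤ (w.length : ℤ) := by omega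
            have h5 : (R : ℝ) < (⌊R⌋ : ℝ) + 1 := Int.lt_floor_add_one R
            calc R < (⌊R⌋ : ℝ) + 1 := h5
              _ ≤ (w.length : ℝ) := by exact_mod_cast h4
          rw [if_neg hdw, hover0 x w hR']
    · rw [if_neg hx]
      exact zero_le

end
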